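/- Let f : ℝ → ℝ be defined by f(x) = sgn(x)·√|x| if |x| ≤ 1 and f(x) = x if |x| > 1, and let h₁ : ℝ → ℝ be given by h₁(t) = 1 + max{(t − 1)/2, t − 1}. Then for every ε ∈ (0, 1), setting δ_ε = ε²/(1 + ε²), one has |(f − h₁)(x₁) − (f − h₁)(x₂)| ≤ ε|x₁ − x₂| for all x₁, x₂ ∈ (1 − δ_ε, 1 + δ_ε). Consequently lip(f − h₁, 1) = 0, so h₁ is a strict 0-estimator of f at the point 1. -/

import Mathlib

open Set

private lemma Glip (ε : ℝ) (hε : ε ∈ Ioo (0:ℝ) 1) :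
    ∀ y₁ y₂ : ℝ, 1 / (1 + ε ^ 2) < y₁ → y₁ ≤ 1 → 1 / (1 + ε ^ 2) < y₂ → y₂ ≤ 1 →
      |(Real.sqrt y₁ - 1 - (y₁ - 1) / 2) - (Real.sqrt y₂ - 1 - (y₂ - 1) / 2)|
        ≤ ε * |y₁ - y₂| := by
  obtain ⟨hε0, hε1⟩ := hε
  intro y₁ y₂ h1 h1' h2 h2'
  have hd : (0:ℝ) < 1 + ε ^ 2 := by positivity
  have hy1 : (0:ℝ) < y₁ := lt_trans (by positivity) h1
  have hy2 : (0:ℝ) < y₂ := lt_trans (by positivity) h2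
  set s₁ := Real.sqrt y₁ with hs₁
  set s₂ := Real.sqrt y₂ with hs₂
  have hsq1 : s₁ ^ 2 = y₁ := Real.sq_sqrt hy1.le
  have hsq2 : s₂ ^ 2 = y₂ := Real.sq_sqrt hy2.le
  have hs1le : s₁ ≤ 1 := by
    rw [show (1:ℝ) = Real.sqrt 1 by simp]; exact Real.sqrt_le_sqrt h1'
  have hs2le : s₂ ≤ 1 := by
    rw [show (1:ℝ) = Real.sqrt 1 by simp]; exact Real.sqrt_le_sqrt h2'
  have hs1ge : y₁ ≤ s₁ := by
    nth_rewrite 1 [show y₁ = Real.sqrt (y₁ * y₁) by rw [Real.sqrt_mul_self hy1.le]]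
    exact Real.sqrt_le_sqrt (by nlinarith)
  have hs2ge : y₂ ≤ s₂ := by
    nth_rewrite 1 [show y₂ = Real.sqrt (y₂ * y₂) by rw [Real.sqrt_mul_self hy2.le]]
    exact Real.sqrt_le_sqrt (by nlinarith)
  have key : (s₁ - 1 - (s₁ ^ 2 - 1) / 2) - (s₂ - 1 - (s₂ ^ 2 - 1) / 2)
      = (s₁ - s₂) * (1 - (s₁ + s₂) / 2) := by ring
  have hsum_lb : 2 / (1 + ε ^ 2) < s₁ + s₂ := by
    have heq : 2 / (1 + ε ^ 2) = 1 / (1 + ε ^ 2) + 1 / (1 + ε ^ 2) := by ring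
    rw [heq]
    exact add_lt_add (lt_of_lt_of_le h1 hs1ge) (lt_of_lt_of_le h2 hs2ge)
  have hsum_ub : s₁ + s₂ ≤ 2 := by linarith
  have hfac : |1 - (s₁ + s₂) / 2| ≤ ε * (s₁ + s₂) := by
    have h0 : 0 ≤ 1 - (s₁ + s₂) / 2 := by linarith
    rw [abs_of_nonneg h0]
    have hs' : 2 < (s₁ + s₂) * (1 + ε ^ 2) := (div_lt_iff₀ hd).mp hsum_lb
    rw [← mul_le_mul_iff_of_pos_right hd]
    nlinarith [mul_lt_mul_of_pos_left hs' hε0,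
      mul_nonneg hε0.le (by linarith : (0:ℝ) ≤ 1 - ε)]
  calc |(s₁ - 1 - (y₁ - 1) / 2) - (s₂ - 1 - (y₂ - 1) / 2)|
      = |s₁ - s₂| * |1 - (s₁ + s₂) / 2| := by
        rw [← hsq1, ← hsq2, key, abs_mul]
    _ ≤ |s₁ - s₂| * (ε * (s₁ + s₂)) := by
        exact mul_le_mul_of_nonneg_left hfac (abs_nonneg _)
    _ = ε * |(s₁ - s₂) * (s₁ + s₂)| := by
        rw [abs_mul, abs_of_nonneg (by linarith [Real.sqrt_nonneg y₁, Real.sqrt_nonneg y₂] : (0:ℝ) ≤ s₁ + s₂)]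
        ring
    _ = ε * |y₁ - y₂| := by rw [show (s₁ - s₂) * (s₁ + s₂) = s₁ ^ 2 - s₂ ^ 2 by ring, hsq1, hsq2]

theorem stmt19 (f h₁ : ℝ → ℝ)
    (hf : ∀ x : ℝ, f x = if |x| ≤ 1 then Real.sign x * Real.sqrt |x| else x)
    (hh : ∀ t : ℝ, h₁ t = 1 + max ((t - 1) / 2) (t - 1)) :
    (∀ ε ∈ Ioo (0:ℝ) 1,
      ∀ x₁ ∈ Ioo (1 - ε ^ 2 / (1 + ε ^ 2)) (1 + ε ^ 2 / (1 + ε ^ 2)),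
        ∀ x₂ ∈ Ioo (1 - ε ^ 2 / (1 + ε ^ 2)) (1 + ε ^ 2 / (1 + ε ^ 2)),
          |(f x₁ - h₁ x₁) - (f x₂ - h₁ x₂)| ≤ ε * |x₁ - x₂|) ∧
    h₁ 1 = f 1 ∧
    ∀ ℓ > (0:ℝ), ∃ U ∈ nhds (1:ℝ), ∀ x₁ ∈ U, ∀ x₂ ∈ U,
      |(f x₁ - h₁ x₁) - (f x₂ - h₁ x₂)| ≤ ℓ * |x₁ - x₂| := by
  have main : ∀ ε ∈ Ioo (0:ℝ) 1,
      ∀ x₁ ∈ Ioo (1 - ε ^ 2 / (1 + ε ^ 2)) (1 + ε ^ 2 / (1 + ε ^ 2)),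
        ∀ x₂ ∈ Ioo (1 - ε ^ 2 / (1 + ε ^ 2)) (1 + ε ^ 2 / (1 + ε ^ 2)),
          |(f x₁ - h₁ x₁) - (f x₂ - h₁ x₂)| ≤ ε * |x₁ - x₂| := by
    intro ε hε x₁ hx₁ x₂ hx₂
    obtain ⟨hε0, hε1⟩ := hε
    have hd : (0:ℝ) < 1 + ε ^ 2 := by positivity
    have hlb : 1 - ε ^ 2 / (1 + ε ^ 2) = 1 / (1 + ε ^ 2) := by field_simp; ring
    have hrep : ∀ x ∈ Ioo (1 - ε ^ 2 / (1 + ε ^ 2)) (1 + ε ^ 2 / (1 + ε ^ 2)),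
        f x - h₁ x = Real.sqrt (min x 1) - 1 - (min x 1 - 1) / 2 := by
      intro x hx
      have hx0 : (0:ℝ) < x := by
        have := hx.1; rw [hlb] at this
        exact lt_trans (by positivity) this
      rcases le_or_gt x 1 with hle | hgt
      · rw [min_eq_left hle, hf, hh]
        rw [abs_of_pos hx0, if_pos hle, Real.sign_of_pos hx0,
          max_eq_left (by linarith : x - 1 ≤ (x - 1) / 2)]
        ring
      · rw [min_eq_right hgt.le, hf, hh]
        rw [abs_of_pos hx0, if_neg (not_le.mpr hgt),
          max_eq_right (by linarith : (x - 1) / 2 ≤ x - 1)]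
        simp
    rw [hrep x₁ hx₁, hrep x₂ hx₂]
    have h1 : 1 / (1 + ε ^ 2) < min x₁ 1 := by
      rw [lt_min_iff]
      constructor
      · rw [← hlb]; exact hx₁.1
      · rw [div_lt_one hd]; nlinarith
    have h2 : 1 / (1 + ε ^ 2) < min x₂ 1 := by
      rw [lt_min_iff]
      constructor
      · rw [← hlb]; exact hx₂.1
      · rw [div_lt_one hd]; nlinarith
    calc |(Real.sqrt (min x₁ 1) - 1 - (min x₁ 1 - 1) / 2)
          - (Real.sqrt (min x₂ 1) - 1 - (min x₂ 1 - 1) / 2)|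
        ≤ ε * |min x₁ 1 - min x₂ 1| :=
          Glip ε ⟨hε0, hε1⟩ _ _ h1 (min_le_right _ _) h2 (min_le_right _ _)
      _ ≤ ε * |x₁ - x₂| := by
          apply mul_le_mul_of_nonneg_left _ hε0.le
          have := abs_min_sub_min_le_max x₁ 1 x₂ 1
          simpa using this
  refine ⟨main, ?_, ?_⟩
  · rw [hf, hh]; norm_num
  · intro ℓ hℓ
    set ε := min ℓ (1/2) with hεdef
    have hε0 : 0 < ε := lt_min hℓ (by norm_num)
    have hε1 : ε < 1 := lt_of_le_of_lt (min_le_right _ _) (by norm_num)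
    have hd : (0:ℝ) < ε ^ 2 / (1 + ε ^ 2) := by positivity
    refine ⟨Ioo (1 - ε ^ 2 / (1 + ε ^ 2)) (1 + ε ^ 2 / (1 + ε ^ 2)),
      Ioo_mem_nhds (by linarith) (by linarith), ?_⟩
    intro x₁ hx₁ x₂ hx₂
    calc |(f x₁ - h₁ x₁) - (f x₂ - h₁ x₂)| ≤ ε * |x₁ - x₂| :=
          main ε ⟨hε0, hε1⟩ x₁ hx₁ x₂ hx₂
      _ ≤ ℓ * |x₁ - x₂| :=
          mul_le_mul_of_nonneg_right (min_le_left _ _) (abs_nonneg _)
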